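/- arXiv:1504.04133 — 6 statements merged into one kernel-verified Lean document; each statement's English description precedes it below -/
import Mathlib

section
/- For every natural number n and all indices i, j ∈ Fin 2^n, the entry G_{i,j} of the polar generator matrix G = F^{⊗n} over GF(2) satisfies G_{i,j} = ∏_{m=0}^{n-1} (1 + b_m(j) + b_m(j)·b_m(i)) in ZMod 2, where b_m(k) ∈ {0,1} denotes the m-th binary digit of k; equivalently, G_{i,j} = 1 if and only if every bit position m < n at which j has a 1 is also a 1 of i (i.e., Nat.land j i = j). -/
/-- The basic polar kernel `F = [[1,0],[1,1]]` over `GF(2)`. -/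
def polarF : Matrix (Fin 2) (Fin 2) (ZMod 2) := !![1, 0; 1, 1]

/-- The `n`-fold Kronecker power `G = F^{⊗n}` of the polar kernel over `GF(2)`,
indexed by `Fin (2^n)` (0-indexed), where the first Kronecker factor corresponds
to the most significant bit of the index. -/
def polarG : (n : ℕ) → Matrix (Fin (2 ^ n)) (Fin (2 ^ n)) (ZMod 2)
  | 0 => 1
  | n + 1 =>
    Matrix.reindex
      (finProdFinEquiv.trans (finCongr (by ring)))
      (finProdFinEquiv.trans (finCongr (by ring)))
      (Matrix.kroneckerMap (· * ·) polarF (polarG n))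

/-- The `m`-th binary digit of `k`, as an element of `ZMod 2`. -/
def bitZ (m k : ℕ) : ZMod 2 := if Nat.testBit k m then 1 else 0

lemma div_lt_two {n : ℕ} (i : Fin (2^(n+1))) : (i : ℕ) / 2^n < 2 :=
  Nat.div_lt_of_lt_mul (Nat.lt_of_lt_of_le i.2 (le_of_eq (pow_succ 2 n)))

lemma polarG_succ (n : ℕ) (i j : Fin (2^(n+1))) :
    polarG (n+1) i j = polarF ⟨(i:ℕ)/2^n, div_lt_two i⟩ ⟨(j:ℕ)/2^n, div_lt_two j⟩ *
      polarG n ⟨(i:ℕ)%2^n, Nat.mod_lt _ (Nat.pow_pos (n := n) (by norm_num))⟩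
        ⟨(j:ℕ)%2^n, Nat.mod_lt _ (Nat.pow_pos (n := n) (by norm_num))⟩ := rfl

lemma polarF_eq (a b : Fin 2) :
    polarF a b = 1 + ((b:ℕ) : ZMod 2) + ((b:ℕ) : ZMod 2) * ((a:ℕ) : ZMod 2) := by
  fin_cases a <;> fin_cases b <;> simp [polarF] <;> decide

lemma bitZ_high {n : ℕ} (i : Fin (2^(n+1))) :
    bitZ n (i : ℕ) = (((i:ℕ)/2^n : ℕ) : ZMod 2) := by
  have h : (i:ℕ)/2^n < 2 := div_lt_two i
  unfold bitZ
  rw [Nat.testBit_eq_decide_div_mod_eq]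
  interval_cases h' : ((i:ℕ)/2^n) <;> decide

lemma bitZ_low {n m : ℕ} (k : ℕ) (hm : m < n) : bitZ m (k % 2^n) = bitZ m k := by
  unfold bitZ
  rw [Nat.testBit_mod_two_pow]
  simp [hm]

lemma polarG_prod (n : ℕ) (i j : Fin (2 ^ n)) :
    polarG n i j =
      ∏ m ∈ Finset.range n, (1 + bitZ m (j : ℕ) + bitZ m (j : ℕ) * bitZ m (i : ℕ)) := by
  induction n with
  | zero =>
    have hij : i = j := by
      have h1 := i.2; have h2 := j.2
      norm_num at h1 h2
      exact Fin.ext (by omega)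
    subst hij
    simp [polarG, Matrix.one_apply]
  | succ n ih =>
    rw [polarG_succ, ih, Finset.prod_range_succ, polarF_eq, ← bitZ_high i, ← bitZ_high j,
      mul_comm]
    congr 1
    apply Finset.prod_congr rfl
    intro m hm
    rw [Finset.mem_range] at hm
    simp only [Fin.val_mk]
    rw [bitZ_low _ hm, bitZ_low _ hm]

lemma factor_ite (m j i : ℕ) :
    (1 + bitZ m j + bitZ m j * bitZ m i) =
      if (Nat.testBit j m → Nat.testBit i m) then 1 else 0 := by
  unfold bitZ
  by_cases hj : Nat.testBit j m <;> by_cases hi : Nat.testBit i m <;>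
    simp [hj, hi] <;> decide

/-- the entries of `G = F^{⊗n}` are given by the bit-product formula
`G_{i,j} = ∏_{m=0}^{n-1} (1 + b_m(j) + b_m(j)·b_m(i))`; equivalently,
`G_{i,j} = 1` iff every bit of `j` is also a bit of `i`, i.e. `j AND i = j`. -/
theorem polarG_entry_formula (n : ℕ) (i j : Fin (2 ^ n)) :
    polarG n i j =
      ∏ m ∈ Finset.range n, (1 + bitZ m (j : ℕ) + bitZ m (j : ℕ) * bitZ m (i : ℕ)) ∧
    (polarG n i j = 1 ↔ Nat.land (j : ℕ) (i : ℕ) = (j : ℕ)) := by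
  refine ⟨polarG_prod n i j, ?_⟩
  rw [polarG_prod]
  have hland : Nat.land (j:ℕ) (i:ℕ) = (j:ℕ) &&& (i:ℕ) := rfl
  have hprod : (∏ m ∈ Finset.range n, (1 + bitZ m (j : ℕ) + bitZ m (j : ℕ) * bitZ m (i : ℕ)))
      = if ∀ m ∈ Finset.range n, (Nat.testBit (j:ℕ) m → Nat.testBit (i:ℕ) m) then 1 else 0 := by
    rw [← Finset.prod_boole]
    exact Finset.prod_congr rfl fun m _ => factor_ite m _ _
  rw [hprod, hland]
  constructor
  · intro h
    have hall : ∀ m ∈ Finset.range n, (Nat.testBit (j:ℕ) m → Nat.testBit (i:ℕ) m) := by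
      by_contra hc
      rw [if_neg hc] at h
      exact absurd h (by decide)
    apply Nat.eq_of_testBit_eq
    intro k
    rw [Nat.testBit_land]
    by_cases hk : k < n
    · by_cases hjk : Nat.testBit (j:ℕ) k
      · simp [hjk, hall k (Finset.mem_range.mpr hk) hjk]
      · simp [hjk]
    · have hfalse : Nat.testBit (j:ℕ) k = false :=
        Nat.testBit_lt_two_pow (lt_of_lt_of_le j.2 (Nat.pow_le_pow_right (by norm_num) (le_of_not_gt hk)))
      simp [hfalse]
  · intro h
    rw [if_pos]
    intro m _ hjm
    have hm := congrArg (fun x => Nat.testBit x m) h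
    simp only [Nat.testBit_land, hjm, Bool.true_and] at hm
    exact hm
end

section
/- (Proposition 1) For every natural number n and every column index j ∈ Fin 2^n, the number of nonzero entries in column j of the polar generator matrix G = F^{⊗n} over GF(2) equals 2^(n − s(j)), where s(j) is the number of 1s in the n-bit binary expansion of j; that is, the column Hamming weight is 2 raised to the Hamming weight of the complemented binary expansion of j. -/
lemma polarF_col_card (b : Fin 2) : (Finset.univ.filter fun a : Fin 2 => polarF a b ≠ 0).card
    = if Nat.testBit (b : ℕ) 0 then 1 else 2 := by revert b; decide


/-- Proposition 1: the number of nonzero entries in column `j` of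
`G = F^{⊗n}` equals `2^(n - s(j))`, where `s(j)` is the number of ones in the
`n`-bit binary expansion of `j` (so `n - s(j)` is the Hamming weight of the
complemented expansion). -/
theorem polarG_column_weight (n : ℕ) (j : Fin (2 ^ n)) :
    (Finset.univ.filter fun i : Fin (2 ^ n) => polarG n i j ≠ 0).card =
      2 ^ (n - ((Finset.range n).filter fun m => Nat.testBit (j : ℕ) m).card) := by
  induction n with
  | zero =>
    show (Finset.univ.filter fun i : Fin (2^0) =>
      (1 : Matrix (Fin (2^0)) (Fin (2^0)) (ZMod 2)) i j ≠ 0).card = _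
    simp [Matrix.one_apply, Finset.filter_eq', Fin.fin_one_eq_zero j]
  | succ n ih =>
    set e : Fin 2 × Fin (2 ^ n) ≃ Fin (2 ^ (n + 1)) :=
      finProdFinEquiv.trans (finCongr (by ring)) with he
    set b : Fin 2 := (e.symm j).1 with hb
    set l : Fin (2 ^ n) := (e.symm j).2 with hl
    have hbval : (b : ℕ) = (j : ℕ) / 2 ^ n := by
      simp [hb, he, finProdFinEquiv_symm_apply, Fin.divNat]
    have hlval : (l : ℕ) = (j : ℕ) % 2 ^ n := by
      simp [hl, he, finProdFinEquiv_symm_apply, Fin.modNat]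
    have hentry : ∀ p : Fin 2 × Fin (2 ^ n), polarG (n+1) (e p) j =
        polarF p.1 b * polarG n p.2 l := by
      intro p
      show (Matrix.kroneckerMap (· * ·) polarF (polarG n)) (e.symm (e p)) (e.symm j) = _
      rw [Equiv.symm_apply_apply]
      rfl
    have hcard : (Finset.univ.filter fun i : Fin (2 ^ (n+1)) => polarG (n+1) i j ≠ 0).card
        = (Finset.univ.filter fun p : Fin 2 × Fin (2 ^ n) =>
            polarF p.1 b ≠ 0 ∧ polarG n p.2 l ≠ 0).card := by
      refine Eq.symm (Finset.card_equiv e fun p => ?_)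
      simp only [Finset.mem_filter, Finset.mem_univ, true_and]
      rw [hentry, mul_ne_zero_iff]
    rw [hcard]
    rw [show (Finset.univ : Finset (Fin 2 × Fin (2^n))) = Finset.univ ×ˢ Finset.univ from rfl,
      Finset.filter_product (fun a => polarF a b ≠ 0) (fun c => polarG n c l ≠ 0), Finset.card_product, polarF_col_card, ih]
    -- bit bookkeeping
    have hjlt : (j : ℕ) < 2 ^ (n+1) := j.2
    have hbit : Nat.testBit (b : ℕ) 0 = Nat.testBit (j : ℕ) n := by
      rw [Nat.testBit_eq_decide_div_mod_eq, Nat.testBit_eq_decide_div_mod_eq, hbval, pow_zero, Nat.div_one]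
    have hlbits : ((Finset.range n).filter fun m => Nat.testBit ((l : ℕ)) m)
        = (Finset.range n).filter fun m => Nat.testBit ((j : ℕ)) m := by
      apply Finset.filter_congr
      intro m hm
      rw [hlval, Nat.testBit_mod_two_pow]
      simp [Finset.mem_range.mp hm]
    set s : ℕ := ((Finset.range n).filter fun m => Nat.testBit ((j : ℕ)) m).card with hs
    have hsle : s ≤ n := le_trans (Finset.card_filter_le _ _) (by simp)
    have hcount : ((Finset.range (n+1)).filter fun m => Nat.testBit ((j : ℕ)) m).card
        = s + (if Nat.testBit (j : ℕ) n then 1 else 0) := by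
      rw [Finset.range_add_one, Finset.filter_insert]
      split
      · rw [Finset.card_insert_of_notMem (by simp)]
      · simp [hs]
    rw [hlbits, ← hs, hcount, hbit]
    by_cases h : Nat.testBit (j : ℕ) n
    · simp only [h, if_true]
      rw [one_mul]
      congr 1
      omega
    · simp only [h, Bool.false_eq_true, if_false]
      rw [← pow_succ']
      congr 1
      omega
end

section
/- (Corollary 2, BEC form) Let ε ∈ [0,1] be a real number and n a natural number. For every bit string b : Fin n → Bool, the value Z_ε(b) lies in [0,1]; moreover, for any two bit strings b, b' : Fin n → Bool such that b'_m = true implies b_m = true for every m (b dominates b'), one has Z_ε(b) ≤ Z_ε(b'). -/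
/-- The Bhattacharyya parameter of the BEC bit channel described by the bit string
`b : Fin n → Bool`: starting from the erasure probability `ε`, the bits are processed
from index `n-1` (most significant) down to index `0`, replacing the current value `z`
by `z^2` if the bit is `true` and by `2z - z^2` if the bit is `false`. -/
def Zrec (ε : ℝ) : (n : ℕ) → (Fin n → Bool) → ℝ
  | 0, _ => ε
  | n + 1, b =>
    let z := Zrec ε n fun m => b m.succ
    if b 0 then z ^ 2 else 2 * z - z ^ 2

/-- Corollary 2, BEC form: for `ε ∈ [0,1]`, every Bhattacharyya
parameter `Z_ε(b)` lies in `[0,1]`; moreover if `b` dominates `b'` (every `true`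
bit of `b'` is a `true` bit of `b`), then `Z_ε(b) ≤ Z_ε(b')`. -/
theorem Zrec_mem_Icc_and_monotone (ε : ℝ) (hε : ε ∈ Set.Icc (0 : ℝ) 1) (n : ℕ) :
    (∀ b : Fin n → Bool, Zrec ε n b ∈ Set.Icc (0 : ℝ) 1) ∧
    (∀ b b' : Fin n → Bool, (∀ m : Fin n, b' m = true → b m = true) →
      Zrec ε n b ≤ Zrec ε n b') := by
  induction n with
  | zero => exact ⟨fun _ => hε, fun _ _ _ => le_refl _⟩
  | succ n ih =>
    obtain ⟨hmem, hmono⟩ := ih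
    constructor
    · intro b
      obtain ⟨h0, h1⟩ := hmem (fun m => b m.succ)
      simp only [Zrec]
      split <;> constructor <;> nlinarith
    · intro b b' h
      have hle : Zrec ε n (fun m => b m.succ) ≤ Zrec ε n (fun m => b' m.succ) :=
        hmono _ _ (fun m hm => h m.succ hm)
      obtain ⟨h0, h1⟩ := hmem (fun m => b m.succ)
      obtain ⟨h0', h1'⟩ := hmem (fun m => b' m.succ)
      simp only [Zrec]
      rcases hb' : b' 0 with _ | _
      · rcases hb : b 0 with _ | _
        · simp only [hb, hb', Bool.false_eq_true, if_false]
          nlinarith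
        · simp only [hb, hb', Bool.false_eq_true, if_true, if_false]
          nlinarith
      · have hb : b 0 = true := h 0 hb'
        simp only [hb, hb', if_true]
        nlinarith
end

section
/- (Theorem 1, BEC instantiation) Let ε ∈ [0,1], n a natural number, and N = 2^n. Define Z_ε(i) for i ∈ Fin N as the Bhattacharyya parameter obtained from the n-bit binary expansion of i. Suppose A ⊆ Fin N is an information set chosen by the polar coding principle, i.e., Z_ε(j) < Z_ε(i) for every j ∈ A and every i ∉ A. Then for every j ∈ A and every i ∉ A, the entry G_{i,j} of G = F^{⊗n} over GF(2) is zero; in other words, no row of G indexed outside A intersects a column of G indexed inside A. -/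
/-- The Bhattacharyya parameter of bit channel `i`, obtained from the `n`-bit binary
expansion of `i`. -/
def Zbit (ε : ℝ) (n : ℕ) (i : Fin (2 ^ n)) : ℝ :=
  Zrec ε n fun m => Nat.testBit (i : ℕ) (m : ℕ)

lemma Zrec_mem_Icc (ε : ℝ) (hε : ε ∈ Set.Icc (0:ℝ) 1) :
    ∀ n (b : Fin n → Bool), Zrec ε n b ∈ Set.Icc (0:ℝ) 1 := by
  intro n
  induction n with
  | zero => intro b; exact hε
  | succ n ih =>
    intro b
    have h := ih fun m => b m.succ
    obtain ⟨h0, h1⟩ := h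
    simp only [Zrec]
    by_cases hb : b 0 <;>
      simp only [hb, Bool.not_eq_true] at * <;>
      simp only [hb, if_true, if_false, Bool.false_eq_true] <;>
      exact ⟨by nlinarith, by nlinarith⟩

lemma Zrec_le (ε : ℝ) (hε : ε ∈ Set.Icc (0:ℝ) 1) :
    ∀ n (b c : Fin n → Bool), (∀ m, b m = true → c m = true) →
      Zrec ε n c ≤ Zrec ε n b := by
  intro n
  induction n with
  | zero => intro b c _; exact le_refl _
  | succ n ih =>
    intro b c hbc
    have hle := ih (fun m => b m.succ) (fun m => c m.succ) (fun m => hbc m.succ)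
    obtain ⟨hb0, hb1⟩ := Zrec_mem_Icc ε hε n (fun m => b m.succ)
    obtain ⟨hc0, hc1⟩ := Zrec_mem_Icc ε hε n (fun m => c m.succ)
    simp only [Zrec]
    set zb := Zrec ε n fun m => b m.succ
    set zc := Zrec ε n fun m => c m.succ
    by_cases hb : b 0
    · have hc : c 0 = true := hbc 0 hb
      simp only [hb, hc, if_true]
      nlinarith
    · simp only [Bool.not_eq_true] at hb
      simp only [hb, Bool.false_eq_true, if_false]
      by_cases hc : c 0
      · simp only [hc, if_true]; nlinarith
      · simp only [Bool.not_eq_true] at hc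
        simp only [hc, Bool.false_eq_true, if_false]; nlinarith

lemma polarG_ne_zero_bits :
    ∀ n (i j : Fin (2^n)), polarG n i j ≠ 0 →
      ∀ m, ((j:ℕ)).testBit m = true → ((i:ℕ)).testBit m = true := by
  intro n
  induction n with
  | zero =>
    intro i j _ m hm
    have : (j:ℕ) = 0 := Nat.lt_one_iff.mp j.isLt
    simp [this] at hm
  | succ n ih =>
    intro i j h m hm
    rw [polarG, Matrix.reindex_apply] at h
    simp only [Equiv.symm_trans_apply, Matrix.submatrix_apply,
      Matrix.kroneckerMap_apply] at h
    have h1 : polarF (finProdFinEquiv.symm ((finCongr (by ring : 2^(n+1) = 2*2^n)) i)).1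
        (finProdFinEquiv.symm ((finCongr (by ring : 2^(n+1) = 2*2^n)) j)).1 ≠ 0 :=
      left_ne_zero_of_mul h
    have h2 : polarG n (finProdFinEquiv.symm ((finCongr (by ring : 2^(n+1) = 2*2^n)) i)).2
        (finProdFinEquiv.symm ((finCongr (by ring : 2^(n+1) = 2*2^n)) j)).2 ≠ 0 :=
      right_ne_zero_of_mul h
    -- component values
    have hival1 : (((finProdFinEquiv.symm ((finCongr (by ring : 2^(n+1) = 2*2^n)) i)).1 : ℕ))
        = (i:ℕ) / 2^n := rfl
    have hjval1 : (((finProdFinEquiv.symm ((finCongr (by ring : 2^(n+1) = 2*2^n)) j)).1 : ℕ))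
        = (j:ℕ) / 2^n := rfl
    have hival2 : (((finProdFinEquiv.symm ((finCongr (by ring : 2^(n+1) = 2*2^n)) i)).2 : ℕ))
        = (i:ℕ) % 2^n := rfl
    have hjval2 : (((finProdFinEquiv.symm ((finCongr (by ring : 2^(n+1) = 2*2^n)) j)).2 : ℕ))
        = (j:ℕ) % 2^n := rfl
    rcases lt_trichotomy m n with hmn | hmn | hmn
    · -- low bits: use induction hypothesis
      have hm' : ((j:ℕ) % 2^n).testBit m = true := by
        rw [Nat.testBit_mod_two_pow]
        simp [hmn, hm]
      have := ih _ _ h2 m (by rw [hjval2]; exact hm')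
      rw [hival2, Nat.testBit_mod_two_pow] at this
      exact (Bool.and_eq_true_iff.mp this).2
    · -- bit n: use polarF
      subst hmn
      have hj1 : (j:ℕ) / 2^m = 1 := by
        have hd : decide ((j:ℕ) / 2^m % 2 = 1) = true := by
          rw [← Nat.testBit_eq_decide_div_mod_eq]; exact hm
        have hd' := of_decide_eq_true hd
        have hlt : (j:ℕ) / 2^m < 2 := Nat.div_lt_of_lt_mul (by
          calc (j:ℕ) < 2^(m+1) := j.isLt
            _ = 2^m * 2 := pow_succ 2 m)
        omega
      -- show the first component of i is 1
      set a := (finProdFinEquiv.symm ((finCongr (by ring : 2^(m+1) = 2*2^m)) i)).1 with ha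
      set c := (finProdFinEquiv.symm ((finCongr (by ring : 2^(m+1) = 2*2^m)) j)).1 with hc
      have hcval : (c:ℕ) = 1 := by rw [hc, hjval1, hj1]
      have haval : (a:ℕ) = 1 := by
        by_contra hne
        have ha0 : (a:ℕ) = 0 := by omega
        apply h1
        rw [show a = (0 : Fin 2) from Fin.ext ha0, show c = (1 : Fin 2) from Fin.ext hcval]
        simp [polarF]
      have hia : (i:ℕ) / 2^m = 1 := by rw [← hival1]; exact haval
      rw [Nat.testBit_eq_decide_div_mod_eq, hia]
      rfl
    · -- high bits: j has no such bits
      have : (j:ℕ) < 2^m := lt_of_lt_of_le j.isLt (Nat.pow_le_pow_right (by norm_num) hmn)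
      rw [Nat.testBit_lt_two_pow this] at hm
      exact absurd hm (by simp)

/-- Theorem 1, BEC instantiation: if the information set `A` is chosen
by the polar coding principle, i.e. `Z_ε(j) < Z_ε(i)` for all `j ∈ A`, `i ∉ A`, then
`G_{i,j} = 0` for every `j ∈ A` and `i ∉ A`: no row of `G` indexed outside `A`
intersects a column of `G` indexed inside `A`. -/
theorem polarG_frozen_row_not_intersect (n : ℕ) (ε : ℝ) (hε : ε ∈ Set.Icc (0 : ℝ) 1)
    (A : Finset (Fin (2 ^ n)))
    (hA : ∀ j ∈ A, ∀ i ∉ A, Zbit ε n j < Zbit ε n i) :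
    ∀ j ∈ A, ∀ i ∉ A, polarG n i j = 0 := by
  intro j hj i hi
  by_contra hne
  have hbits := polarG_ne_zero_bits n i j hne
  have hlt := hA j hj i hi
  unfold Zbit at hlt
  exact absurd hlt (not_lt.mpr (Zrec_le ε hε n _ _ (fun m hb => hbits m hb)))
end

section
/- (All information bits in error) Let n ≥ 1, N = 2^n, and let A ⊆ Fin N be a set containing the last index N−1 and satisfying G_{i,j} = 0 for every j ∈ A and i ∉ A. Let v : Fin N → ZMod 2 be the indicator vector of A (v_i = 1 iff i ∈ A). Then the re-encoded vector q = vG satisfies q_j = 0 for every j ∈ A with j ≠ N−1, and q_{N−1} = 1; in particular the Hamming weight of q restricted to A equals 1. -/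
/-- The last index `2^n - 1` of `Fin (2^n)`. -/
def lastIdx (n : ℕ) : Fin (2 ^ n) := ⟨2 ^ n - 1, by have := Nat.two_pow_pos n; omega⟩

lemma polarF_colsum (c : Fin 2) : (∑ a : Fin 2, polarF a c) = if c = 1 then 1 else 0 := by
  fin_cases c <;> simp [polarF, Fin.sum_univ_two] <;> decide

lemma polarG_colsum (n : ℕ) (j : Fin (2 ^ n)) :
    (∑ i, polarG n i j) = if j = lastIdx n then 1 else 0 := by
  induction n with
  | zero =>
    have hlt : (j : ℕ) < 1 := j.isLt
    have hj : j = lastIdx 0 := Fin.ext (by show (j : ℕ) = 0; omega)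
    subst hj
    rw [if_pos rfl]
    show (1 : Matrix (Fin (2 ^ 0)) (Fin (2 ^ 0)) (ZMod 2)) (lastIdx 0) (lastIdx 0) = 1
    exact Matrix.one_apply_eq _
  | succ n ih =>
    set e : Fin 2 × Fin (2 ^ n) ≃ Fin (2 ^ (n + 1)) :=
      finProdFinEquiv.trans (finCongr (by ring)) with he
    have hsum : (∑ i, polarG (n + 1) i j)
        = ∑ p : Fin 2 × Fin (2 ^ n), polarG (n + 1) (e p) j :=
      (Equiv.sum_comp e (fun i => polarG (n + 1) i j)).symm
    have hval : ∀ p : Fin 2 × Fin (2 ^ n),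
        polarG (n + 1) (e p) j = polarF p.1 (e.symm j).1 * polarG n p.2 (e.symm j).2 := by
      intro p
      show (Matrix.reindex e e (Matrix.kroneckerMap (· * ·) polarF (polarG n))) (e p) j = _
      simp [Matrix.reindex_apply, Matrix.kroneckerMap]
    rw [hsum]
    simp only [hval]
    rw [Fintype.sum_prod_type]
    show (∑ x : Fin 2, ∑ y : Fin (2 ^ n), polarF x (e.symm j).1 * polarG n y (e.symm j).2) = _
    rw [← Finset.sum_mul_sum]
    rw [polarF_colsum, ih]
    have hlast : e (1, lastIdx n) = lastIdx (n + 1) := by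
      apply Fin.ext
      have h1 : (e (1, lastIdx n)).val = (lastIdx n).val + 2 ^ n * 1 := rfl
      rw [h1]
      have := Nat.two_pow_pos n
      simp [lastIdx, pow_succ]
      omega
    have hiff : j = lastIdx (n + 1) ↔ (e.symm j).1 = 1 ∧ (e.symm j).2 = lastIdx n := by
      constructor
      · intro h
        have : e.symm j = (1, lastIdx n) := by rw [h, ← hlast, Equiv.symm_apply_apply]
        rw [this]; exact ⟨rfl, rfl⟩
      · rintro ⟨h1, h2⟩
        have : e.symm j = (1, lastIdx n) := Prod.ext h1 h2
        calc j = e (e.symm j) := (Equiv.apply_symm_apply e j).symm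
          _ = lastIdx (n + 1) := by rw [this, hlast]
    by_cases h : j = lastIdx (n + 1)
    · obtain ⟨h1, h2⟩ := hiff.mp h
      rw [if_pos h, if_pos h1, if_pos h2, one_mul]
    · rw [if_neg h]
      rcases not_and_or.mp (fun hc => h (hiff.mpr hc)) with h1 | h2
      · rw [if_neg h1, zero_mul]
      · rw [if_neg h2, mul_zero]

/-- all information bits in error: let `A` contain the last index
`N-1 = 2^n - 1` and satisfy `G_{i,j} = 0` for all `j ∈ A`, `i ∉ A`. If `v` is the
indicator vector of `A`, then `q = vG` vanishes on every `j ∈ A` other than `N-1`,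
`q_{N-1} = 1`, and the Hamming weight of `q` restricted to `A` equals `1`. -/
theorem polarG_all_errors_cancel (n : ℕ) (hn : 1 ≤ n) (A : Finset (Fin (2 ^ n)))
    (hlast : lastIdx n ∈ A)
    (hA : ∀ j ∈ A, ∀ i ∉ A, polarG n i j = 0) :
    (∀ j ∈ A, j ≠ lastIdx n →
      (∑ i : Fin (2 ^ n), (if i ∈ A then (1 : ZMod 2) else 0) * polarG n i j) = 0) ∧
    (∑ i : Fin (2 ^ n), (if i ∈ A then (1 : ZMod 2) else 0) * polarG n i (lastIdx n)) = 1 ∧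
    (A.filter fun j =>
      (∑ i : Fin (2 ^ n), (if i ∈ A then (1 : ZMod 2) else 0) * polarG n i j) ≠ 0).card
      = 1 := by
  have key : ∀ j ∈ A,
      (∑ i : Fin (2 ^ n), (if i ∈ A then (1 : ZMod 2) else 0) * polarG n i j)
        = if j = lastIdx n then 1 else 0 := by
    intro j hj
    rw [← polarG_colsum n j]
    apply Finset.sum_congr rfl
    intro i _
    by_cases hi : i ∈ A
    · rw [if_pos hi, one_mul]
    · rw [if_neg hi, zero_mul, hA j hj i hi]
  refine ⟨fun j hj hne => by rw [key j hj, if_neg hne], by rw [key _ hlast, if_pos rfl], ?_⟩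
  have hfilter : (A.filter fun j =>
      (∑ i : Fin (2 ^ n), (if i ∈ A then (1 : ZMod 2) else 0) * polarG n i j) ≠ 0)
      = {lastIdx n} := by
    ext j
    simp only [Finset.mem_filter, Finset.mem_singleton]
    constructor
    · rintro ⟨hj, hq⟩
      by_contra hne
      exact hq (by rw [key j hj, if_neg hne])
    · rintro rfl
      exact ⟨hlast, by rw [key _ hlast, if_pos rfl]; exact one_ne_zero⟩
  rw [hfilter, Finset.card_singleton]
end

section
/- (Bit-reversal invariance) Let n be a natural number and let σ : Fin 2^n → Fin 2^n be the bit-reversal permutation, i.e., for every m < n, the m-th binary digit of σ(i) equals the (n−1−m)-th binary digit of i. Then for all i, j ∈ Fin 2^n, the entries of G = F^{⊗n} over GF(2) satisfy G_{σ(i), σ(j)} = G_{i,j}; consequently, if B is the permutation matrix of σ (so that (BG)_{i,j} = G_{σ(i),j}), then for any A ⊆ Fin 2^n and for all a, a' ∈ A, (BG)_{a, σ(a')} = G_{a, a'}, i.e., the submatrix of BG with rows A and columns σ(A) equals the submatrix G_{AA}. -/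
/-- The `m`-th bit of `x`, as an element of `Fin 2`. -/
def bitf (x m : ℕ) : Fin 2 := if Nat.testBit x m then 1 else 0

/-- Entrywise product formula for the Kronecker power. -/
lemma polarG_apply : ∀ (n : ℕ) (i j : Fin (2^n)),
    polarG n i j = ∏ m ∈ Finset.range n, polarF (bitf i m) (bitf j m)
  | 0, i, j => by
    have : i = j := by
      have h1 := i.2; have h2 := j.2
      exact Fin.ext (by omega)
    simp [this, polarG, Matrix.one_apply]
  | n+1, i, j => by
    have h1 : (0:ℕ) < 2^n := Nat.pow_pos (by norm_num)
    have hid : (i:ℕ)/2^n < 2 := by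
      rw [Nat.div_lt_iff_lt_mul h1]; simpa [pow_succ, mul_comm] using i.2
    have hjd : (j:ℕ)/2^n < 2 := by
      rw [Nat.div_lt_iff_lt_mul h1]; simpa [pow_succ, mul_comm] using j.2
    have key : polarG (n+1) i j =
        polarF ⟨(i:ℕ)/2^n, hid⟩ ⟨(j:ℕ)/2^n, hjd⟩ *
        polarG n ⟨(i:ℕ)%2^n, Nat.mod_lt _ h1⟩ ⟨(j:ℕ)%2^n, Nat.mod_lt _ h1⟩ := by
      simp [polarG, Matrix.reindex_apply, Matrix.kroneckerMap, finProdFinEquiv, finCongr]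
      rfl
    rw [key, polarG_apply n, Finset.prod_range_succ, mul_comm]
    congr 1
    · apply Finset.prod_congr rfl
      intro m hm
      simp only [Finset.mem_range] at hm
      congr 1 <;> simp [bitf, Nat.testBit_mod_two_pow, hm]
    · have hdiv : ∀ (x : ℕ) (hd : x / 2^n < 2), (⟨x/2^n, hd⟩ : Fin 2) = bitf x n := by
        intro x hd
        simp only [bitf, Nat.testBit_eq_decide_div_mod_eq]
        have : x / 2^n = 0 ∨ x / 2^n = 1 := by interval_cases h : x / 2^n <;> simp
        rcases this with h | h <;> simp [h]
      rw [hdiv i hid, hdiv j hjd]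

/-- bit-reversal invariance: if `σ` is the bit-reversal permutation of
`Fin (2^n)` (the `m`-th binary digit of `σ i` is the `(n-1-m)`-th digit of `i` for
all `m < n`), then `G_{σ(i),σ(j)} = G_{i,j}` for all `i, j`; consequently, if `B` is
the permutation matrix of `σ` (so `(B*G)_{i,j} = G_{σ(i),j}`), then for any `A` and
all `a, a' ∈ A` one has `(B*G)_{a,σ(a')} = G_{a,a'}`, i.e. the submatrix of `B*G`
with rows `A` and columns `σ(A)` is the submatrix `G_{AA}`. -/
theorem polarG_bit_reversal_invariance (n : ℕ) (σ : Equiv.Perm (Fin (2 ^ n)))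
    (hσ : ∀ i : Fin (2 ^ n), ∀ m < n,
      Nat.testBit ((σ i : Fin (2 ^ n)) : ℕ) m = Nat.testBit (i : ℕ) (n - 1 - m)) :
    (∀ i j : Fin (2 ^ n), polarG n (σ i) (σ j) = polarG n i j) ∧
    (∀ B : Matrix (Fin (2 ^ n)) (Fin (2 ^ n)) (ZMod 2),
      (∀ i j : Fin (2 ^ n), B i j = if σ i = j then 1 else 0) →
      ∀ A : Finset (Fin (2 ^ n)), ∀ a ∈ A, ∀ a' ∈ A,
        (B * polarG n) a (σ a') = polarG n a a') := by
  have part1 : ∀ i j : Fin (2 ^ n), polarG n (σ i) (σ j) = polarG n i j := by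
    intro i j
    rw [polarG_apply, polarG_apply]
    refine Finset.prod_nbij' (fun m => n - 1 - m) (fun m => n - 1 - m) ?_ ?_ ?_ ?_ ?_
    · intro m hm; simp only [Finset.mem_range] at *; omega
    · intro m hm; simp only [Finset.mem_range] at *; omega
    · intro m hm; simp only [Finset.mem_range] at hm; show n - 1 - (n - 1 - m) = m; omega
    · intro m hm; simp only [Finset.mem_range] at hm; show n - 1 - (n - 1 - m) = m; omega
    · intro m hm
      simp only [Finset.mem_range] at hm
      rw [show bitf (σ i) m = bitf i (n-1-m) from by rw [bitf, hσ i m hm]; rfl,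
          show bitf (σ j) m = bitf j (n-1-m) from by rw [bitf, hσ j m hm]; rfl]
  refine ⟨part1, ?_⟩
  intro B hB A a _ a' _
  rw [Matrix.mul_apply]
  simp only [hB, ite_mul, one_mul, zero_mul, Finset.sum_ite_eq, Finset.mem_univ, if_true]
  exact part1 a a'
end
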